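/- Let P : ℝ^N → ℝ^N denote the orthogonal projection onto the hyperplane {x ∈ ℝ^N : Σ x_i = 0}, and let S_ω := { f(θ) : θ ∈ ℝ^N, κ_i(θ) > 0 for all i, Σ_i 1/κ_i(θ) ≤ 2 }. Then the image under P of the cube [−N/2, N/2]^N is contained in the closure of S_ω; that is, every frequency vector in this polytope (the scaled Voronoi cell of the root lattice A_{N−1}) admits an at-least-marginally-stable fully synchronized configuration. -/

import Mathlib

open Real Finset

/-- The Kuramoto interaction vector field `f_i(θ) = Σ_j sin (θ_j - θ_i)`. -/
noncomputable def kuraF (N : ℕ) (θ : Fin N → ℝ) : Fin N → ℝ :=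
  fun i => ∑ j, Real.sin (θ j - θ i)

/-- `κ_i(θ) = Σ_j cos (θ_j - θ_i)`. -/
noncomputable def kappa (N : ℕ) (θ : Fin N → ℝ) (i : Fin N) : ℝ :=
  ∑ j, Real.cos (θ j - θ i)

/-- The set `S_ω` of frequency vectors admitting a stable fully synchronized
configuration. -/
def stableFreqSet (N : ℕ) : Set (Fin N → ℝ) :=
  {ω | ∃ θ : Fin N → ℝ, (∀ i, 0 < kappa N θ i) ∧ (∑ i, 1 / kappa N θ i ≤ 2) ∧
    ω = kuraF N θ}

/-- Orthogonal projection of `ℝ^N` onto the hyperplane `{x | Σ_i x_i = 0}`. -/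
noncomputable def meanZeroProj (N : ℕ) (x : Fin N → ℝ) : Fin N → ℝ :=
  fun i => x i - (∑ j, x j) / N


lemma keyIneq {N : ℕ} (hN : 1 ≤ N) (w φ : Fin N → ℝ) (a b : ℝ)
    (ha : 0 ≤ a) (hb : 0 ≤ b)
    (hφpos : ∀ i, 0 < φ i)
    (hφsq : ∀ i, (φ i)^2 = 1 - (w i)^2)
    (hwsum : ∑ i, w i = 0)
    (hQ : ∑ i, 1 / φ i = 2 * ∑ i, φ i)
    (hwa : ∀ i, w i ≤ a) (hwb : ∀ i, -b ≤ w i) :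
    (N : ℝ) ≤ (a + b) * ∑ i, φ i := by
  have hNe : Nonempty (Fin N) := ⟨⟨0, by omega⟩⟩
  set T : ℝ := ∑ i, φ i with hT
  set W : ℝ := ∑ i, w i / φ i with hW
  have hTpos : 0 < T := Finset.sum_pos (fun i _ => hφpos i) Finset.univ_nonempty
  -- identity: ∑ w^2/φ = T
  have id2 : ∑ i, (w i)^2 / φ i = T := by
    have h1 : ∀ i, (w i)^2 / φ i = 1 / φ i - φ i := by
      intro i
      have hne := (hφpos i).ne'
      field_simp
      linarith [hφsq i]
    rw [Finset.sum_congr rfl (fun i _ => h1 i), Finset.sum_sub_distrib, hQ]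
    ring
  -- Cauchy-Schwarz (Engel form) with f = 1 - γ w, γ = W/T
  have hstar : (N:ℝ)^2 ≤ 2*T^2 - W^2 := by
    set γ : ℝ := W / T with hγ
    have hCS := Finset.sq_sum_div_le_sum_sq_div Finset.univ (fun i => 1 - γ * w i)
      (fun i _ => hφpos i)
    have hnum : ∑ i, (1 - γ * w i) = (N:ℝ) := by
      rw [Finset.sum_sub_distrib, ← Finset.mul_sum, hwsum]
      simp
    have hden : ∑ i, (1 - γ * w i)^2 / φ i = 2*T - 2*γ*W + γ^2*T := by
      have h2 : ∀ i, (1 - γ * w i)^2 / φ i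
          = 1 / φ i - 2*γ*(w i / φ i) + γ^2*((w i)^2 / φ i) := by
        intro i
        have hne := (hφpos i).ne'
        field_simp
        ring
      rw [Finset.sum_congr rfl (fun i _ => h2 i)]
      rw [Finset.sum_add_distrib, Finset.sum_sub_distrib, ← Finset.mul_sum, ← Finset.mul_sum,
        hQ, id2, ← hW]
      all_goals ring
    rw [hnum, hden] at hCS
    have hTne : T ≠ 0 := hTpos.ne'
    have h3 : (N:ℝ)^2 / T ≤ 2*T - W^2/T := by
      calc (N:ℝ)^2 / T ≤ 2*T - 2*γ*W + γ^2*T := hCS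
        _ = 2*T - W^2/T := by rw [hγ]; field_simp; ring
    have h4 := (div_le_iff₀ hTpos).mp h3
    have h5 : (2*T - W^2/T)*T = 2*T^2 - W^2 := by field_simp
    linarith [h4, h5.ge, h5.le]
  -- pointwise range bound
  have hTT : T ≤ (a-b)*W + 2*(a*b)*T := by
    have hpt : ∀ i, (w i)^2 / φ i ≤ ((a-b)*(w i) + a*b) / φ i := by
      intro i
      have hp := hφpos i
      gcongr
      nlinarith [hwa i, hwb i]
    calc T = ∑ i, (w i)^2 / φ i := id2.symm
      _ ≤ ∑ i, ((a-b)*(w i) + a*b)/φ i := Finset.sum_le_sum (fun i _ => hpt i)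
      _ = (a-b)*W + 2*(a*b)*T := by
          have h6 : ∀ i, ((a-b)*(w i) + a*b)/φ i
              = (a-b)*(w i/φ i) + (a*b)*(1/φ i) := by
            intro i
            have hne := (hφpos i).ne'
            field_simp
            all_goals ring
          rw [Finset.sum_congr rfl (fun i _ => h6 i), Finset.sum_add_distrib,
            ← Finset.mul_sum, ← Finset.mul_sum, hQ, ← hW]
          all_goals ring
  have hNnn : (0:ℝ) ≤ (N:ℝ) := Nat.cast_nonneg N
  rcases le_or_gt 1 (2*(a*b)) with hp | hp
  · have h2 : 2 ≤ (a+b)^2 := by nlinarith [sq_nonneg (a-b)]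
    have h3 : (N:ℝ)^2 ≤ ((a+b)*T)^2 := by nlinarith [sq_nonneg W, sq_nonneg T]
    exact le_of_pow_le_pow_left₀ two_ne_zero (mul_nonneg (add_nonneg ha hb) hTpos.le) h3
  · have h1 : 0 < 1 - 2*(a*b) := by linarith
    have hK : T*(1-2*(a*b)) ≤ (a-b)*W := by linarith
    have hKpos : 0 < T*(1-2*(a*b)) := mul_pos hTpos h1
    have hL : (T*(1-2*(a*b)))^2 ≤ ((a-b)*W)^2 := pow_le_pow_left₀ hKpos.le hK 2
    have hW2 : W^2 ≤ 2*T^2 - (N:ℝ)^2 := by linarith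
    have hKpos2 : 0 < (a-b)^2 := by
      rcases (sq_nonneg (a-b)).lt_or_eq with h | h
      · exact h
      · exfalso
        have hab : a - b = 0 := pow_eq_zero_iff two_ne_zero |>.mp h.symm
        rw [hab] at hL
        simp at hL
        nlinarith [hKpos, hL]
    have hid : (T*(1-2*(a*b)))^2
        = 2*((a-b)^2*T^2) - ((a+b)^2*T^2)*(a-b)^2 + (T*(1-a^2-b^2))^2 := by ring
    have hL' : (T*(1-2*(a*b)))^2 ≤ (a-b)^2 * W^2 := by
      calc (T*(1-2*(a*b)))^2 ≤ ((a-b)*W)^2 := hL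
        _ = (a-b)^2*W^2 := by ring
    have hWK := mul_le_mul_of_nonneg_left hW2 (sq_nonneg (a-b))
    have hfin : (N:ℝ)^2 * (a-b)^2 ≤ ((a+b)^2*T^2) * (a-b)^2 := by
      linarith [hL', hWK, hid.le, hid.ge, sq_nonneg (T*(1-a^2-b^2))]
    have h3 : (N:ℝ)^2 ≤ ((a+b)*T)^2 := by
      have h7 := (mul_le_mul_iff_left₀ hKpos2).mp hfin
      calc (N:ℝ)^2 ≤ (a+b)^2*T^2 := h7
        _ = ((a+b)*T)^2 := by ring
    exact le_of_pow_le_pow_left₀ two_ne_zero (mul_nonneg (add_nonneg ha hb) hTpos.le) h3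

lemma tmul_mem {N : ℕ} (hN : 2 ≤ N) (ω : Fin N → ℝ) (μ : ℝ)
    (hsum : ∑ i, ω i = 0)
    (hbd : ∀ i, |ω i + μ| ≤ (N:ℝ)/2)
    (hμ : |μ| ≤ (N:ℝ)/2)
    (hω : ω ≠ 0) {t : ℝ} (ht0 : 0 < t) (ht1 : t < 1) :
    (fun i => t * ω i) ∈ stableFreqSet N := by
  have hNe : Nonempty (Fin N) := ⟨⟨0, by omega⟩⟩
  have hN1 : 1 ≤ N := by omega
  have hN2 : (2:ℝ) ≤ (N:ℝ) := by exact_mod_cast hN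
  have hN0 : (0:ℝ) < N := by linarith
  obtain ⟨i₀, -, hi₀⟩ := Finset.exists_max_image Finset.univ (fun i => |ω i|)
    Finset.univ_nonempty
  obtain ⟨m, hm⟩ : ∃ m : ℝ, m = |ω i₀| := ⟨_, rfl⟩
  have hm' : ∀ i, |ω i| ≤ m := by
    intro i; rw [hm]; exact hi₀ i (Finset.mem_univ i)
  have hm0 : 0 < m := by
    rcases Function.ne_iff.mp hω with ⟨j, hj⟩
    calc (0:ℝ) < |ω j| := abs_pos.mpr hj
      _ ≤ m := hm' j
  obtain ⟨ε, hε⟩ : ∃ e : ℝ, e = 1/(2*(N:ℝ)) := ⟨_, rfl⟩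
  have hε0 : 0 < ε := by rw [hε]; positivity
  have hε1 : ε ≤ 1 := by rw [hε, div_le_one (by positivity)]; linarith
  obtain ⟨u, hu⟩ : ∃ u : ℝ, u = 1 - ε^2 := ⟨_, rfl⟩
  have hu0 : 0 ≤ u := by rw [hu]; nlinarith
  obtain ⟨l1, hl1⟩ : ∃ l : ℝ, l = Real.sqrt u / m := ⟨_, rfl⟩
  have hl10 : 0 ≤ l1 := by rw [hl1]; exact div_nonneg (Real.sqrt_nonneg u) hm0.le
  obtain ⟨c, hc⟩ : ∃ c : ℝ → Fin N → ℝ,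
      ∀ l i, c l i = Real.sqrt (1 - l^2*(ω i)^2) := ⟨_, fun _ _ => rfl⟩
  have hl1sq : l1^2 * m^2 = u := by
    rw [hl1, div_pow, Real.sq_sqrt hu0]
    field_simp
  have hclb : ∀ l ∈ Set.Icc (0:ℝ) l1, ∀ i, ε ≤ c l i := by
    intro l hl i
    have h1 : l^2*(ω i)^2 ≤ u := by
      calc l^2*(ω i)^2 ≤ l1^2*m^2 := by
            apply mul_le_mul (pow_le_pow_left₀ hl.1 hl.2 2) ?_ (sq_nonneg _) (sq_nonneg _)
            calc (ω i)^2 = |ω i|^2 := (sq_abs _).symm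
              _ ≤ m^2 := pow_le_pow_left₀ (abs_nonneg _) (hm' i) 2
        _ = u := hl1sq
    have h2 : ε^2 ≤ 1 - l^2*(ω i)^2 := by
      have h3 : ε^2 = 1 - u := by rw [hu]; ring
      linarith
    calc ε = Real.sqrt (ε^2) := (Real.sqrt_sq hε0.le).symm
      _ ≤ c l i := by rw [hc]; exact Real.sqrt_le_sqrt h2
  have hc0 : ∀ l ∈ Set.Icc (0:ℝ) l1, ∀ i, 0 < c l i := fun l hl i =>
    lt_of_lt_of_le hε0 (hclb l hl i)
  have hcnn : ∀ l ∈ Set.Icc (0:ℝ) l1, ∀ i, 0 ≤ 1 - l^2*(ω i)^2 := by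
    intro l hl i
    by_contra h
    push_neg at h
    have h4 : c l i = 0 := by rw [hc]; exact Real.sqrt_eq_zero'.mpr h.le
    have := hclb l hl i
    rw [h4] at this
    linarith
  have hcle : ∀ (l : ℝ) (i : Fin N), c l i ≤ 1 := by
    intro l i
    rw [hc]
    calc Real.sqrt (1 - l^2*(ω i)^2) ≤ Real.sqrt 1 :=
        Real.sqrt_le_sqrt (by nlinarith [sq_nonneg (l*ω i)])
      _ = 1 := Real.sqrt_one
  obtain ⟨Q, hQdef⟩ : ∃ Q : ℝ → ℝ, ∀ l, Q l = ∑ i, (1 / c l i - 2 * c l i) :=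
    ⟨_, fun _ => rfl⟩
  have hccont : ∀ i, Continuous (fun l => c l i) := by
    intro i
    have : (fun l => c l i) = fun l => Real.sqrt (1 - l^2*(ω i)^2) := by
      funext l; rw [hc]
    rw [this]
    exact Real.continuous_sqrt.comp
      (continuous_const.sub ((continuous_pow 2).mul continuous_const))
  have hQcont : ContinuousOn Q (Set.Icc 0 l1) := by
    have hQeq : Q = fun l => ∑ i, (1 / c l i - 2 * c l i) := funext hQdef
    rw [hQeq]
    apply continuousOn_finset_sum
    intro i _
    apply ContinuousOn.sub
    · exact ContinuousOn.div continuousOn_const ((hccont i).continuousOn)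
        (fun l hl => (hc0 l hl i).ne')
    · exact (continuous_const.mul (hccont i)).continuousOn
  have hQmono : MonotoneOn Q (Set.Icc 0 l1) := by
    intro x hx y hy hxy
    rw [hQdef, hQdef]
    apply Finset.sum_le_sum
    intro i _
    have hcy : c y i ≤ c x i := by
      rw [hc, hc]
      apply Real.sqrt_le_sqrt
      have h1 : x^2 ≤ y^2 := pow_le_pow_left₀ hx.1 hxy 2
      nlinarith [sq_nonneg (ω i)]
    have hcy0 : 0 < c y i := hc0 y hy i
    have h2 := one_div_le_one_div_of_le hcy0 hcy
    linarith
  have hQ0 : Q 0 = -(N:ℝ) := by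
    have h1 : ∀ i : Fin N, 1 / c 0 i - 2 * c 0 i = -1 := by
      intro i
      have h2 : c 0 i = 1 := by rw [hc]; norm_num
      rw [h2]; norm_num
    rw [hQdef, Finset.sum_congr rfl (fun i _ => h1 i)]
    simp [Finset.card_univ]
  have hci₀ : c l1 i₀ = ε := by
    have h1 : 1 - l1^2*(ω i₀)^2 = ε^2 := by
      have h2 : (ω i₀)^2 = m^2 := by rw [hm]; rw [sq_abs]
      rw [h2, hl1sq, hu]
      ring
    rw [hc, h1, Real.sqrt_sq hε0.le]
  have hl1mem : l1 ∈ Set.Icc (0:ℝ) l1 := ⟨hl10, le_refl _⟩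
  have hQl1 : 0 < Q l1 := by
    have hterm : ∀ i ∈ Finset.univ.erase i₀, (-1:ℝ) ≤ 1 / c l1 i - 2 * c l1 i := by
      intro i _
      have h1 : c l1 i ≤ 1 := hcle l1 i
      have h0 : 0 < c l1 i := hc0 l1 hl1mem i
      have h2 : 1 ≤ 1 / c l1 i := by rw [le_div_iff₀ h0]; linarith
      linarith
    have hsum' := Finset.card_nsmul_le_sum _ _ _ hterm
    rw [Finset.card_erase_of_mem (Finset.mem_univ i₀), Finset.card_univ,
      Fintype.card_fin] at hsum'
    have hQsplit : Q l1 = (1 / c l1 i₀ - 2 * c l1 i₀)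
        + ∑ i ∈ Finset.univ.erase i₀, (1 / c l1 i - 2 * c l1 i) := by
      rw [hQdef]
      exact (Finset.add_sum_erase _ _ (Finset.mem_univ i₀)).symm
    have hterm0 : 1 / c l1 i₀ - 2 * c l1 i₀ = 2*(N:ℝ) - 1/(N:ℝ) := by
      rw [hci₀, hε, one_div_one_div]
      have h9 : 2*(1/(2*(N:ℝ))) = 1/(N:ℝ) := by
        field_simp
      linarith
    have hcast : ((N-1 : ℕ):ℝ) = (N:ℝ) - 1 := by
      push_cast [hN1]; ring
    have hsmul : ((N-1 : ℕ)) • (-1:ℝ) = -((N:ℝ)-1) := by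
      rw [nsmul_eq_mul, hcast]; ring
    rw [hsmul] at hsum'
    have hinv : 1/(N:ℝ) ≤ 1 := by
      rw [div_le_one hN0]; linarith
    rw [hQsplit, hterm0]
    linarith
  obtain ⟨ls, hlsmem, hQls⟩ : ∃ ls ∈ Set.Icc (0:ℝ) l1, Q ls = 0 := by
    have h1 := intermediate_value_Icc hl10 hQcont
    have h0mem : (0:ℝ) ∈ Set.Icc (Q 0) (Q l1) := ⟨by rw [hQ0]; linarith, hQl1.le⟩
    obtain ⟨ls, hls, h⟩ := h1 h0mem
    exact ⟨ls, hls, h⟩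
  have hQls' : ∑ i, 1 / c ls i = 2 * ∑ i, c ls i := by
    have h1 : Q ls = (∑ i, 1 / c ls i) - 2 * ∑ i, c ls i := by
      rw [hQdef, Finset.sum_sub_distrib, ← Finset.mul_sum]
    rw [h1] at hQls
    linarith
  have hμ2 := abs_le.mp hμ
  have hkey : 1 ≤ ls * ∑ i, c ls i := by
    have hsq : ∀ i, (c ls i)^2 = 1 - (ls * ω i)^2 := by
      intro i
      rw [hc, Real.sq_sqrt (hcnn ls hlsmem i)]
      ring
    have happ := keyIneq hN1 (fun i => ls * ω i) (fun i => c ls i)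
      (ls * ((N:ℝ)/2 - μ)) (ls * ((N:ℝ)/2 + μ))
      (mul_nonneg hlsmem.1 (by linarith [hμ2.2]))
      (mul_nonneg hlsmem.1 (by linarith [hμ2.1]))
      (fun i => hc0 ls hlsmem i) hsq
      (by rw [← Finset.mul_sum, hsum]; ring)
      hQls'
      (fun i => by
        have h4 := (abs_le.mp (hbd i)).2
        exact mul_le_mul_of_nonneg_left (by linarith) hlsmem.1)
      (fun i => by
        have h4 := (abs_le.mp (hbd i)).1
        have h5 := mul_le_mul_of_nonneg_left
          (show -((N:ℝ)/2 + μ) ≤ ω i from by linarith) hlsmem.1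
        calc -(ls * ((N:ℝ)/2 + μ)) = ls * (-((N:ℝ)/2 + μ)) := by ring
          _ ≤ ls * ω i := h5)
    have heq : (ls * ((N:ℝ)/2 - μ) + ls * ((N:ℝ)/2 + μ)) = ls * (N:ℝ) := by ring
    rw [heq] at happ
    have h6 : (N:ℝ) * 1 ≤ (N:ℝ) * (ls * ∑ i, c ls i) := by
      calc (N:ℝ) * 1 = (N:ℝ) := by ring
        _ ≤ ls * (N:ℝ) * ∑ i, c ls i := happ
        _ = (N:ℝ) * (ls * ∑ i, c ls i) := by ring
    exact (mul_le_mul_iff_right₀ hN0).mp h6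
  obtain ⟨g, hgdef⟩ : ∃ g : ℝ → ℝ, ∀ l, g l = l * ∑ i, c l i := ⟨_, fun _ => rfl⟩
  have hgcont : ContinuousOn g (Set.Icc 0 ls) := by
    have hgeq : g = fun l => l * ∑ i, c l i := funext hgdef
    rw [hgeq]
    apply ContinuousOn.mul continuousOn_id
    exact (continuous_finset_sum _ (fun i _ => hccont i)).continuousOn
  have hsub : Set.Icc (0:ℝ) ls ⊆ Set.Icc 0 l1 := Set.Icc_subset_Icc (le_refl _) hlsmem.2
  have hg0 : g 0 = 0 := by rw [hgdef]; ring
  obtain ⟨lt, hltmem, hglt⟩ : ∃ lt ∈ Set.Icc (0:ℝ) ls, g lt = t := by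
    have h1 := intermediate_value_Icc hlsmem.1 hgcont
    have htmem : t ∈ Set.Icc (g 0) (g ls) := by
      constructor
      · rw [hg0]; exact ht0.le
      · have h2 : (1:ℝ) ≤ g ls := by rw [hgdef]; exact hkey
        linarith
    obtain ⟨lt, hlt, h⟩ := h1 htmem
    exact ⟨lt, hlt, h⟩
  have hltD : lt ∈ Set.Icc (0:ℝ) l1 := hsub hltmem
  have hQlt : Q lt ≤ 0 := by
    rw [← hQls]
    exact hQmono hltD hlsmem hltmem.2
  obtain ⟨C, hCdef⟩ : ∃ C : ℝ, C = ∑ i, c lt i := ⟨_, rfl⟩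
  have hCpos : 0 < C := by
    rw [hCdef]
    exact Finset.sum_pos (fun i _ => hc0 lt hltD i) Finset.univ_nonempty
  obtain ⟨θ, hθ⟩ : ∃ θ : Fin N → ℝ, ∀ i, θ i = Real.arcsin (-(lt * ω i)) :=
    ⟨_, fun _ => rfl⟩
  have habs : ∀ i, |lt * ω i| ≤ 1 := by
    intro i
    have h3 := hcnn lt hltD i
    rw [← Real.sqrt_sq_eq_abs]
    calc Real.sqrt ((lt*ω i)^2) ≤ Real.sqrt 1 := Real.sqrt_le_sqrt (by nlinarith)
      _ = 1 := Real.sqrt_one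
  have hsin : ∀ i, Real.sin (θ i) = -(lt * ω i) := by
    intro i
    rw [hθ]
    apply Real.sin_arcsin
    · linarith [(abs_le.mp (habs i)).2]
    · linarith [(abs_le.mp (habs i)).1]
  have hcos : ∀ i, Real.cos (θ i) = c lt i := by
    intro i
    rw [hθ, Real.cos_arcsin, hc]
    congr 1
    ring
  have hsinsum : ∑ j, Real.sin (θ j) = 0 := by
    rw [Finset.sum_congr rfl (fun j _ => hsin j)]
    have h1 : ∑ j, -(lt * ω j) = -∑ j, lt * ω j := Finset.sum_neg_distrib _
    rw [h1, ← Finset.mul_sum, hsum]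
    ring
  have hcossum : ∑ j, Real.cos (θ j) = C := by
    rw [Finset.sum_congr rfl (fun j _ => hcos j), hCdef]
  have hkappa : ∀ i, kappa N θ i = C * c lt i := by
    intro i
    show (∑ j, Real.cos (θ j - θ i)) = C * c lt i
    have h1 : ∀ j, Real.cos (θ j - θ i)
        = Real.cos (θ j) * Real.cos (θ i) + Real.sin (θ j) * Real.sin (θ i) :=
      fun j => Real.cos_sub _ _
    rw [Finset.sum_congr rfl (fun j _ => h1 j), Finset.sum_add_distrib,
      ← Finset.sum_mul, ← Finset.sum_mul, hsinsum, hcossum, hcos i]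
    ring
  refine ⟨θ, ?_, ?_, ?_⟩
  · intro i
    rw [hkappa i]
    exact mul_pos hCpos (hc0 lt hltD i)
  · have h1 : ∀ i, 1 / kappa N θ i = (1 / c lt i) * (1/C) := by
      intro i
      rw [hkappa i, one_div, mul_inv, one_div, one_div, mul_comm]
    rw [Finset.sum_congr rfl (fun i _ => h1 i), ← Finset.sum_mul]
    have hQle : ∑ i, 1 / c lt i ≤ 2*C := by
      have h2 : Q lt = (∑ i, 1 / c lt i) - 2 * C := by
        rw [hQdef, Finset.sum_sub_distrib, ← Finset.mul_sum, hCdef]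
      linarith
    calc (∑ i, 1 / c lt i) * (1/C) ≤ (2*C)*(1/C) :=
        mul_le_mul_of_nonneg_right hQle (by positivity)
      _ = 2 := by field_simp
  · funext i
    show t * ω i = ∑ j, Real.sin (θ j - θ i)
    have h1 : ∀ j, Real.sin (θ j - θ i)
        = Real.sin (θ j) * Real.cos (θ i) - Real.cos (θ j) * Real.sin (θ i) :=
      fun j => Real.sin_sub _ _
    rw [Finset.sum_congr rfl (fun j _ => h1 j), Finset.sum_sub_distrib,
      ← Finset.sum_mul, ← Finset.sum_mul, hsinsum, hcossum, hsin i]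
    have h2 : lt * C = t := by
      rw [← hglt, hgdef, hCdef]
    rw [← h2]
    ring

/-- The projection onto the mean-zero hyperplane of the cube `[-N/2, N/2]^N` (the scaled
Voronoi cell of the root lattice `A_{N-1}`) is contained in the closure of the stable
frequency set. -/
theorem stmt12 (N : ℕ) (hN : 2 ≤ N) :
    meanZeroProj N '' {x | ∀ i, x i ∈ Set.Icc (-(N : ℝ) / 2) ((N : ℝ) / 2)}
      ⊆ closure (stableFreqSet N) := by
  rintro y ⟨x, hx, rfl⟩
  have hN0 : (0:ℝ) < N := by
    have : (2:ℝ) ≤ N := by exact_mod_cast hN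
    linarith
  obtain ⟨μ, hμdef⟩ : ∃ μ : ℝ, μ = (∑ j, x j)/N := ⟨_, rfl⟩
  have hproj : ∀ i, meanZeroProj N x i = x i - μ := by
    intro i; rw [hμdef]; rfl
  have hsum : ∑ i, meanZeroProj N x i = 0 := by
    rw [Finset.sum_congr rfl (fun i _ => hproj i), Finset.sum_sub_distrib,
      Finset.sum_const, Finset.card_univ, Fintype.card_fin, hμdef, nsmul_eq_mul]
    field_simp
    ring
  have hxb : ∀ i, -((N:ℝ)/2) ≤ x i ∧ x i ≤ (N:ℝ)/2 := by
    intro i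
    have h := hx i
    rw [Set.mem_Icc] at h
    constructor
    · have : -(N:ℝ)/2 = -((N:ℝ)/2) := by ring
      rw [← this]; exact h.1
    · exact h.2
  have hbd : ∀ i, |meanZeroProj N x i + μ| ≤ (N:ℝ)/2 := by
    intro i
    rw [hproj i]
    have h := hxb i
    rw [abs_le]
    constructor <;> [linarith [h.1]; linarith [h.2]]
  have hμabs : |μ| ≤ (N:ℝ)/2 := by
    rw [hμdef, abs_div, abs_of_pos hN0, div_le_iff₀ hN0]
    have h1 : |∑ j, x j| ≤ ∑ j, |x j| := Finset.abs_sum_le_sum_abs _ _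
    have h2 : ∑ j : Fin N, |x j| ≤ ∑ _j : Fin N, (N:ℝ)/2 := by
      apply Finset.sum_le_sum
      intro j _
      have h := hxb j
      rw [abs_le]
      exact ⟨h.1, h.2⟩
    have h3 : ∑ _j : Fin N, (N:ℝ)/2 = (N:ℝ)/2 * N := by
      rw [Finset.sum_const, Finset.card_univ, Fintype.card_fin, nsmul_eq_mul]
      ring
    linarith
  by_cases h0 : meanZeroProj N x = 0
  · rw [h0]
    apply subset_closure
    have hk : ∀ i, kappa N (fun _ => 0) i = (N:ℝ) := by
      intro i
      show (∑ _j : Fin N, Real.cos (0 - 0)) = (N:ℝ)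
      simp
    refine ⟨(fun _ => 0), ?_, ?_, ?_⟩
    · intro i
      rw [hk i]
      exact hN0
    · have h1 : ∀ i : Fin N, 1 / kappa N (fun _ => 0) i = 1/(N:ℝ) := by
        intro i; rw [hk i]
      rw [Finset.sum_congr rfl (fun i _ => h1 i), Finset.sum_const,
        Finset.card_univ, Fintype.card_fin, nsmul_eq_mul, mul_one_div,
        div_self hN0.ne']
      norm_num
    · funext i
      show (0:ℝ) = ∑ _j : Fin N, Real.sin (0 - 0)
      simp
  · haveI : (nhdsWithin (1:ℝ) (Set.Ioo (0:ℝ) 1)).NeBot := by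
      apply mem_closure_iff_nhdsWithin_neBot.mp
      rw [closure_Ioo (by norm_num : (0:ℝ) ≠ 1)]
      exact ⟨zero_le_one, le_refl 1⟩
    have hcont : Continuous (fun s : ℝ => fun i => s * meanZeroProj N x i) := by
      apply continuous_pi
      intro i
      exact continuous_id.mul continuous_const
    have htend : Filter.Tendsto (fun s : ℝ => fun i => s * meanZeroProj N x i)
        (nhdsWithin 1 (Set.Ioo 0 1)) (nhds (meanZeroProj N x)) := by
      have h1 := (hcont.tendsto 1).mono_left (nhdsWithin_le_nhds (s := Set.Ioo (0:ℝ) 1))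
      have h2 : (fun i => (1:ℝ) * meanZeroProj N x i) = meanZeroProj N x := by
        funext i; ring
      rwa [h2] at h1
    apply mem_closure_of_tendsto htend
    filter_upwards [self_mem_nhdsWithin] with s hs
    exact tmul_mem hN (meanZeroProj N x) μ hsum hbd hμabs h0 hs.1 hs.2
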